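/- arXiv:1502.06402 — 7 statements merged into one kernel-verified Lean document; each statement's English description precedes it below -/
import Mathlib

section
/- The set Q of admissible moments is open in ℝᵏ: for every b ∈ Q there exists ε' > 0 such that for all ξ ∈ ℝᵏ with |ξ| < ε', we have b + ξ ∈ Q. -/
open MeasureTheory

def probDens {X : Type*} [MeasurableSpace X] (μ : Measure X) : Set (X → ℝ) :=
  {ρ | Integrable ρ μ ∧ 0 ≤ᵐ[μ] ρ ∧ ∫ t, ρ t ∂μ = 1}

/-- The vector of moments of `a` under the density `ρ`. -/
noncomputable def mom {X : Type*} [MeasurableSpace X] (μ : Measure X) {k : ℕ}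
    (a : X → EuclideanSpace ℝ (Fin k)) (ρ : X → ℝ) : EuclideanSpace ℝ (Fin k) :=
  (EuclideanSpace.equiv (Fin k) ℝ).symm fun i => ∫ t, a t i * ρ t ∂μ

/-- The set `Q` of admissible moments. -/
def momentSet {X : Type*} [MeasurableSpace X] (μ : Measure X) {k : ℕ}
    (a : X → EuclideanSpace ℝ (Fin k)) : Set (EuclideanSpace ℝ (Fin k)) :=
  mom μ a '' probDens μ

/-- The set `Q` of admissible moments is open: around every `b ∈ Q` there is a ball of
moment vectors still lying in `Q`.  The constraint functions are `L²`-orthonormal and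
orthogonal to constants, and (a consequence of the pseudo-Haar property, assumed here)
every `b ∈ Q` is generated by a density which is a.e. bounded below by a positive
constant. -/
theorem momentSet_isOpen {X : Type*} [MeasurableSpace X]
    (μ : Measure X) [IsFiniteMeasure μ] {k : ℕ}
    (a : X → EuclideanSpace ℝ (Fin k)) (ha : MemLp a ⊤ μ)
    (horth : ∀ i j, ∫ t, a t i * a t j ∂μ = if i = j then 1 else 0)
    (hzero : ∀ i, ∫ t, a t i ∂μ = 0)
    (hgen : ∀ b ∈ momentSet μ a, ∃ ρ ∈ probDens μ, mom μ a ρ = b ∧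
      ∃ ε > 0, ∀ᵐ t ∂μ, ε ≤ ρ t) :
    ∀ b ∈ momentSet μ a, ∃ ε' > 0, ∀ ξ : EuclideanSpace ℝ (Fin k),
      ‖ξ‖ < ε' → b + ξ ∈ momentSet μ a := by
  intro b hb
  obtain ⟨ρ, ⟨hρint, hρpos, hρone⟩, hmom, ε, hε, hbd⟩ := hgen b hb
  set C : ℝ := (eLpNorm a ⊤ μ).toReal with hCdef
  have hC0 : (0:ℝ) ≤ C := ENNReal.toReal_nonneg
  have htop : eLpNormEssSup a μ ≠ ⊤ := by
    rw [← eLpNorm_exponent_top]; exact ha.2.ne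
  have hCae : ∀ᵐ t ∂μ, ‖a t‖ ≤ C := by
    filter_upwards [ae_le_eLpNormEssSup (f := a) (μ := μ)] with t ht
    have := ENNReal.toReal_mono htop ht
    simpa [hCdef, eLpNorm_exponent_top] using this
  have hcoord : ∀ (x : EuclideanSpace ℝ (Fin k)) i, |x i| ≤ ‖x‖ := by
    intro x i
    have h := abs_real_inner_le_norm (EuclideanSpace.single i (1:ℝ)) x
    simpa [EuclideanSpace.inner_single_left, EuclideanSpace.norm_single] using h
  have hmes : ∀ i, AEStronglyMeasurable (fun t => a t i) μ := by
    intro i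
    exact ((EuclideanSpace.proj i : EuclideanSpace ℝ (Fin k) →L[ℝ] ℝ).continuous.comp_aestronglyMeasurable ha.1)
  have haint : Integrable a μ := ha.integrable le_top
  have hint_i : ∀ i, Integrable (fun t => a t i) μ := by
    intro i
    exact (EuclideanSpace.proj i : EuclideanSpace ℝ (Fin k) →L[ℝ] ℝ).integrable_comp haint
  have hbd_i : ∀ i, ∀ᵐ t ∂μ, ‖a t i‖ ≤ C := by
    intro i
    filter_upwards [hCae] with t ht
    exact le_trans (by simpa [Real.norm_eq_abs] using hcoord (a t) i) ht
  have hmul_ρ : ∀ i, Integrable (fun t => a t i * ρ t) μ :=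
    fun i => hρint.bdd_mul (hmes i) (hbd_i i)
  have hmul_aa : ∀ i j, Integrable (fun t => a t i * a t j) μ :=
    fun i j => (hint_i j).bdd_mul (hmes i) (hbd_i i)
  have hbco : ∀ i, b i = ∫ t, a t i * ρ t ∂μ := fun i => by rw [← hmom]; rfl
  refine ⟨ε / (C + 1), div_pos hε (by linarith), ?_⟩
  intro ξ hξ
  have hg_int : Integrable (fun t => ∑ j, ξ j * a t j) μ :=
    integrable_finset_sum _ fun j _ => (hint_i j).const_mul (ξ j)
  have key : ∀ᵐ t ∂μ, |∑ j, ξ j * a t j| < ε := by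
    filter_upwards [hCae] with t ht
    have h1 : |∑ j, ξ j * a t j| ≤ ‖ξ‖ * ‖a t‖ := by
      have h := abs_real_inner_le_norm ξ (a t)
      simpa [PiLp.inner_apply, RCLike.inner_apply, conj_trivial, mul_comm] using h
    have h2 : ‖ξ‖ * ‖a t‖ ≤ ‖ξ‖ * C := mul_le_mul_of_nonneg_left ht (norm_nonneg ξ)
    have h3 : ‖ξ‖ * (C + 1) < (ε / (C + 1)) * (C + 1) :=
      mul_lt_mul_of_pos_right hξ (by linarith)
    have h4 : (ε / (C + 1)) * (C + 1) = ε := div_mul_cancel₀ _ (by linarith)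
    nlinarith [norm_nonneg ξ]
  set ρ' : X → ℝ := fun t => ρ t + ∑ j, ξ j * a t j with hρ'def
  have hρ'mem : ρ' ∈ probDens μ := by
    refine ⟨hρint.add hg_int, ?_, ?_⟩
    · filter_upwards [hbd, key] with t h1 h2
      have := neg_abs_le (∑ j, ξ j * a t j)
      simp only [Pi.zero_apply, hρ'def]
      linarith
    · rw [integral_add hρint hg_int, hρone,
        integral_finset_sum _ fun j _ => (hint_i j).const_mul (ξ j)]
      simp [integral_const_mul, hzero]
  refine ⟨ρ', hρ'mem, ?_⟩
  have hcomp : ∀ i, (∫ t, a t i * ρ' t ∂μ) = b i + ξ i := by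
    intro i
    have heq : (fun t => a t i * ρ' t)
        = fun t => a t i * ρ t + ∑ j, ξ j * (a t i * a t j) := by
      funext t
      simp [hρ'def, mul_add, Finset.mul_sum, mul_left_comm]
    rw [heq, integral_add (hmul_ρ i)
        (integrable_finset_sum _ fun j _ => (hmul_aa i j).const_mul (ξ j)),
      integral_finset_sum _ fun j _ => (hmul_aa i j).const_mul (ξ j)]
    simp [integral_const_mul, horth, hbco i]
  exact PiLp.ext fun i => by simpa [mom] using hcomp i
end

section
/- Let b ∈ Q, let b₀ ∈ ∂Q be a closest boundary point to b, set u = (b₀−b)/|b₀−b| and ε² = |b₀−b|, and let S_u = ess sup_{t∈X} u·a(t) and E = {t ∈ X : S_u < u·a(t) + ε}. Then S_u − b·u = ε², and every ρ ∈ P(X) with ∫_X a ρ dμ = b satisfies ∫_E ρ dμ ≥ 1 − ε. -/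
open MeasureTheory
open scoped RealInnerProductSpace

private lemma coord_abs_le_norm {k : ℕ} (x : EuclideanSpace ℝ (Fin k)) (i : Fin k) :
    |x i| ≤ ‖x‖ := by
  rw [EuclideanSpace.norm_eq]
  calc |x i| = Real.sqrt (‖x i‖ ^ 2) := by rw [Real.sqrt_sq_eq_abs]; simp
  _ ≤ _ := Real.sqrt_le_sqrt (Finset.single_le_sum (f := fun j => ‖x j‖ ^ 2)
      (fun j _ => sq_nonneg _) (Finset.mem_univ i))

/-- Concentration of mass near the boundary: with `b₀` a closest boundary point to
`b ∈ Q`, `u = (b₀ - b)/|b₀ - b|`, `ε² = |b₀ - b|`, `S_u = ess sup u·a` and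
`E = {t : S_u < u·a(t) + ε}`, one has `S_u - b·u = ε²`, and every probability density
generating `b` puts mass at least `1 - ε` on `E`. -/
theorem mass_concentration_near_boundary {X : Type*} [MeasurableSpace X]
    (μ : Measure X) [IsFiniteMeasure μ] {k : ℕ}
    (a : X → EuclideanSpace ℝ (Fin k)) (ha : MemLp a ⊤ μ)
    (b b₀ : EuclideanSpace ℝ (Fin k))
    (hb : b ∈ momentSet μ a) (hb₀ : b₀ ∈ frontier (momentSet μ a))
    (hmin : ∀ b' ∈ frontier (momentSet μ a), ‖b₀ - b‖ ≤ ‖b' - b‖)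
    (ε : ℝ) (hε : 0 < ε) (hε2 : ε ^ 2 = ‖b₀ - b‖)
    (u : EuclideanSpace ℝ (Fin k)) (hu : u = ‖b₀ - b‖⁻¹ • (b₀ - b))
    (hb₀u : ⟪b₀, u⟫ = essSup (fun t => ⟪u, a t⟫) μ) :
    essSup (fun t => ⟪u, a t⟫) μ - ⟪b, u⟫ = ε ^ 2 ∧
    ∀ ρ ∈ probDens μ, mom μ a ρ = b →
      1 - ε ≤ ∫ t in {s | essSup (fun r => ⟪u, a r⟫) μ < ⟪u, a s⟫ + ε}, ρ t ∂μ := by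
  set g : X → ℝ := fun t => ⟪u, a t⟫ with hgdef
  set S : ℝ := essSup g μ with hSdef
  have hpos : (0 : ℝ) < ‖b₀ - b‖ := by rw [← hε2]; positivity
  -- Part 1
  have hpart1 : S - ⟪b, u⟫ = ε ^ 2 := by
    have h1 : ⟪b₀, u⟫ - ⟪b, u⟫ = ⟪b₀ - b, u⟫ := (inner_sub_left _ _ _).symm
    have h2 : ⟪b₀ - b, u⟫ = ‖b₀ - b‖⁻¹ * ⟪b₀ - b, b₀ - b⟫ := by
      rw [hu, real_inner_smul_right]
    rw [real_inner_self_eq_norm_sq] at h2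
    have h3 : ⟪b₀ - b, u⟫ = ‖b₀ - b‖ := by
      rw [h2]; field_simp
    rw [← hb₀u] at *
    rw [← hε2] at h3
    linarith
  refine ⟨hpart1, ?_⟩
  intro ρ hρ hmom
  obtain ⟨hρint, hρ0, hρ1⟩ := hρ
  -- measurability and boundedness
  have hg_meas : AEStronglyMeasurable g μ :=
    AEStronglyMeasurable.inner aestronglyMeasurable_const ha.1
  set C : ℝ := (eLpNormEssSup a μ).toReal with hCdef
  have hlt : eLpNormEssSup a μ < ⊤ := by
    have := ha.2; rwa [eLpNorm_exponent_top] at this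
  have hC : ∀ᵐ t ∂μ, ‖a t‖ ≤ C := by
    filter_upwards [ae_le_eLpNormEssSup (f := a) (μ := μ)] with t ht
    have := ENNReal.toReal_mono hlt.ne ht
    simpa using this
  have hgbd : ∀ᵐ t ∂μ, ‖g t‖ ≤ ‖u‖ * C := by
    filter_upwards [hC] with t ht
    calc ‖g t‖ = |⟪u, a t⟫| := by rw [Real.norm_eq_abs]
    _ ≤ ‖u‖ * ‖a t‖ := abs_real_inner_le_norm u (a t)
    _ ≤ ‖u‖ * C := by
        exact mul_le_mul_of_nonneg_left ht (norm_nonneg u)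
  have hbdd : Filter.IsBoundedUnder (· ≤ ·) (ae μ) g := by
    refine ⟨‖u‖ * C, Filter.eventually_map.2 ?_⟩
    filter_upwards [hgbd] with t ht
    exact (le_abs_self _).trans (by rwa [Real.norm_eq_abs] at ht)
  have hgS : ∀ᵐ t ∂μ, g t ≤ S := ae_le_essSup hbdd
  -- measurable representative
  set g' : X → ℝ := hg_meas.mk g with hg'def
  have hg' : StronglyMeasurable g' := hg_meas.stronglyMeasurable_mk
  have hgg' : g =ᵐ[μ] g' := hg_meas.ae_eq_mk
  set E' : Set X := {s | S < g' s + ε} with hE'def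
  have hE' : MeasurableSet E' :=
    (hg'.measurable.add_const ε) measurableSet_Ioi
  have hEE' : {s | S < g s + ε} =ᵐ[μ] E' :=
    Filter.eventuallyEq_set.2 (hgg'.mono fun t ht => by
      simp only [hE'def, Set.mem_setOf_eq, ht])
  -- integrability
  have hcoord : ∀ i, Integrable (fun t => a t i * ρ t) μ := by
    intro i
    refine hρint.bdd_mul (c := C)
      ((EuclideanSpace.proj (𝕜 := ℝ) i).continuous.comp_aestronglyMeasurable ha.1) ?_
    filter_upwards [hC] with t ht
    exact (coord_abs_le_norm (a t) i).trans ht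
  have hgρ : Integrable (fun t => g t * ρ t) μ := hρint.bdd_mul hg_meas hgbd
  -- integral identity
  have hinner : ⟪u, b⟫ = ∫ t, g t * ρ t ∂μ := by
    rw [← hmom]
    have expand : ∀ t, g t * ρ t = ∑ i, u i * (a t i * ρ t) := by
      intro t
      simp [hgdef, PiLp.inner_apply, RCLike.inner_apply, conj_trivial,
        Finset.sum_mul, mul_assoc]
      exact Finset.sum_congr rfl (fun i _ => by ring)
    calc ⟪u, mom μ a ρ⟫ = ∑ i, u i * ∫ t, a t i * ρ t ∂μ := by
          simp [mom, PiLp.inner_apply, RCLike.inner_apply, conj_trivial]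
          exact Finset.sum_congr rfl (fun i _ => mul_comm _ _)
    _ = ∑ i, ∫ t, u i * (a t i * ρ t) ∂μ := by
          simp [integral_const_mul]
    _ = ∫ t, ∑ i, u i * (a t i * ρ t) ∂μ :=
          (integral_finset_sum _ (fun i _ => (hcoord i).const_mul _)).symm
    _ = ∫ t, g t * ρ t ∂μ := by simp_rw [← expand]
  have hkey : ∫ t, g t * ρ t ∂μ = S - ε ^ 2 := by
    rw [← hinner, real_inner_comm]; linarith
  -- split integral
  set p : ℝ := ∫ t in E', ρ t ∂μ with hpdef
  set q : ℝ := ∫ t in E'ᶜ, ρ t ∂μ with hqdef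
  have hsum_ρ : p + q = 1 := by
    rw [hpdef, hqdef, integral_add_compl hE' hρint, hρ1]
  have hsum_g : (∫ t in E', g t * ρ t ∂μ) + (∫ t in E'ᶜ, g t * ρ t ∂μ) = S - ε ^ 2 := by
    rw [integral_add_compl hE' hgρ, hkey]
  have h1 : ∫ t in E', g t * ρ t ∂μ ≤ S * p := by
    have := integral_mono_ae (μ := μ.restrict E') hgρ.integrableOn
      ((hρint.const_mul S).integrableOn)
      (ae_restrict_of_ae (by
        filter_upwards [hgS, hρ0] with t h1 h2
        exact mul_le_mul_of_nonneg_right h1 h2))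
    rwa [integral_const_mul] at this
  have h2 : ∫ t in E'ᶜ, g t * ρ t ∂μ ≤ (S - ε) * q := by
    have := integral_mono_ae (μ := μ.restrict E'ᶜ) hgρ.integrableOn
      ((hρint.const_mul (S - ε)).integrableOn)
      ((ae_restrict_iff' hE'.compl).2 (by
        filter_upwards [hgg', hρ0] with t h1 h2 hmem
        have : g' t + ε ≤ S := not_lt.1 hmem
        have hgle : g t ≤ S - ε := by rw [h1]; linarith
        exact mul_le_mul_of_nonneg_right hgle h2))
    rwa [integral_const_mul] at this
  have hSpq : S * p + S * q = S := by rw [← mul_add, hsum_ρ, mul_one]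
  have hεq : ε * q ≤ ε ^ 2 := by nlinarith [hsum_g, h1, h2]
  have hq : q ≤ ε := by
    have := (mul_le_mul_iff_right₀ hε).1 (by nlinarith : ε * q ≤ ε * ε)
    exact this
  rw [setIntegral_congr_set hEE']
  linarith
end

section
/- For u ∈ S^{k-1} and ε > 0 define E_ε^u = {t ∈ X : ess sup_{s∈X} u·a(s) < u·a(t) + ε}. Then μ(E_ε^u) → 0 as ε → 0, uniformly in u: for every γ > 0 there exists δ > 0 such that for all u ∈ S^{k-1} and all 0 < ε < δ, μ(E_ε^u) < γ. -/
open MeasureTheory Filter Topology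
open scoped RealInnerProductSpace ENNReal

/-- Uniform smallness of the near-maximal sets: with
`E_ε^u = {t : ess sup_s u·a(s) < u·a(t) + ε}`, the measure `μ(E_ε^u)` tends to `0` as
`ε → 0`, uniformly in the unit vector `u`.  The pseudo-Haar property enters through the
hypothesis that for each `u` the set where `u·a` attains its essential supremum is null. -/
theorem measure_near_max_set_tendsto_zero_uniformly {X : Type*} [MeasurableSpace X]
    (μ : Measure X) [IsFiniteMeasure μ] {k : ℕ}
    (a : X → EuclideanSpace ℝ (Fin k)) (ha : MemLp a ⊤ μ)
    (hps : ∀ u : EuclideanSpace ℝ (Fin k), ‖u‖ = 1 →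
      μ {t | ⟪u, a t⟫ = essSup (fun s => ⟪u, a s⟫) μ} = 0) :
    ∀ γ : ℝ≥0∞, 0 < γ → ∃ δ : ℝ, 0 < δ ∧
      ∀ u : EuclideanSpace ℝ (Fin k), ‖u‖ = 1 → ∀ ε : ℝ, 0 < ε → ε < δ →
        μ {t | essSup (fun s => ⟪u, a s⟫) μ < ⟪u, a t⟫ + ε} < γ := by
  intro γ hγ
  -- trivial case: zero measure
  rcases eq_or_ne μ 0 with hμ0 | hμ0
  · exact ⟨1, one_pos, fun u hu ε hε hεδ => by simp [hμ0, hγ]⟩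
  have hae : (ae μ).NeBot := ae_neBot.2 hμ0
  -- replace γ by a finite positive γ₀ ≤ γ
  set γ₀ : ℝ≥0∞ := min γ 1 with hγ₀def
  have hγ₀pos : 0 < γ₀ := lt_min hγ (by norm_num)
  have hγ₀le : γ₀ ≤ γ := min_le_left _ _
  -- essential bound on ‖a‖
  obtain ⟨C, hC0, hC⟩ : ∃ C : ℝ, 0 ≤ C ∧ ∀ᵐ t ∂μ, ‖a t‖ ≤ C := by
    refine ⟨(eLpNormEssSup a μ).toReal, ENNReal.toReal_nonneg, ?_⟩
    have hfin : eLpNormEssSup a μ ≠ ⊤ := by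
      have := ha.2
      rwa [eLpNorm_exponent_top, lt_top_iff_ne_top] at this
    filter_upwards [ae_le_eLpNormEssSup (f := a) (μ := μ)] with t ht
    have : (‖a t‖₊ : ℝ≥0∞).toReal ≤ (eLpNormEssSup a μ).toReal :=
      ENNReal.toReal_mono hfin ht
    simpa using this
  set f : EuclideanSpace ℝ (Fin k) → X → ℝ := fun u t => ⟪u, a t⟫ with hf
  set M : EuclideanSpace ℝ (Fin k) → ℝ := fun u => essSup (f u) μ with hM
  have habs : ∀ u : EuclideanSpace ℝ (Fin k), ‖u‖ = 1 → ∀ᵐ t ∂μ, |f u t| ≤ C := by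
    intro u hu
    filter_upwards [hC] with t ht
    calc |⟪u, a t⟫| ≤ ‖u‖ * ‖a t‖ := abs_real_inner_le_norm _ _
      _ = ‖a t‖ := by rw [hu, one_mul]
      _ ≤ C := ht
  have hbdd : ∀ u : EuclideanSpace ℝ (Fin k), ‖u‖ = 1 →
      IsBoundedUnder (· ≤ ·) (ae μ) (f u) := fun u hu =>
    ⟨C, (habs u hu).mono fun t ht => (abs_le.1 ht).2⟩
  have hbddge : ∀ u : EuclideanSpace ℝ (Fin k), ‖u‖ = 1 →
      IsBoundedUnder (· ≥ ·) (ae μ) (f u) := fun u hu =>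
    ⟨-C, (habs u hu).mono fun t ht => (abs_le.1 ht).1⟩
  have hmeas : ∀ u : EuclideanSpace ℝ (Fin k), AEMeasurable (f u) μ := fun u =>
    ((aestronglyMeasurable_const (b := u)).inner ha.aestronglyMeasurable).aemeasurable
  -- key essSup comparison: M v ≤ M u + C * ‖v - u‖
  have hMcomp : ∀ u v : EuclideanSpace ℝ (Fin k), ‖u‖ = 1 → ‖v‖ = 1 →
      M v ≤ M u + C * ‖v - u‖ := by
    intro u v hu hv
    have h1 : ∀ᵐ t ∂μ, f v t ≤ M u + C * ‖v - u‖ := by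
      filter_upwards [hC, ae_le_essSup (hbdd u hu)] with t ht hMt
      have : f v t - f u t ≤ C * ‖v - u‖ := by
        have h2 : f v t - f u t = ⟪v - u, a t⟫ := by
          simp [hf, inner_sub_left]
        rw [h2]
        calc ⟪v - u, a t⟫ ≤ |⟪v - u, a t⟫| := le_abs_self _
          _ ≤ ‖v - u‖ * ‖a t‖ := abs_real_inner_le_norm _ _
          _ ≤ ‖v - u‖ * C := by
              exact mul_le_mul_of_nonneg_left ht (norm_nonneg _)
          _ = C * ‖v - u‖ := mul_comm _ _
      linarith
    exact limsup_le_of_le ((hbddge v hv).isCoboundedUnder_le) h1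
  -- For each unit vector, a good ε
  have key : ∀ u : EuclideanSpace ℝ (Fin k), ∃ ε : ℝ, 0 < ε ∧
      (‖u‖ = 1 → μ {t | M u < f u t + 3 * ε} < γ₀) := by
    intro u
    by_cases hu : ‖u‖ = 1
    · -- decreasing sets
      set s : ℕ → Set X := fun n => {t | M u < f u t + 1 / (n + 1)} with hs
      have hsm : ∀ n, NullMeasurableSet (s n) μ := by
        intro n
        exact nullMeasurableSet_lt aemeasurable_const
          ((hmeas u).add aemeasurable_const)
      have hanti : Antitone s := by
        intro n m hnm t ht
        simp only [hs, Set.mem_setOf_eq] at ht ⊢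
        have h1 : (1 : ℝ) / (m + 1) ≤ 1 / (n + 1) := by
          apply one_div_le_one_div_of_le
          · positivity
          · exact_mod_cast by omega
        linarith
      have hinter : μ (⋂ n, s n) = 0 := by
        have hsub : (⋂ n, s n) ⊆ {t | f u t = M u} ∪ {t | M u < f u t} := by
          intro t ht
          simp only [Set.mem_iInter, hs, Set.mem_setOf_eq] at ht
          have : M u ≤ f u t := by
            by_contra h
            push_neg at h
            obtain ⟨n, hn⟩ := exists_nat_one_div_lt (by linarith : 0 < M u - f u t)
            exact absurd (ht n) (by push_neg; linarith)
          rcases eq_or_lt_of_le this with h | h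
          · exact Or.inl h.symm
          · exact Or.inr h
        exact measure_mono_null hsub
          (measure_union_null (hps u hu) (meas_essSup_lt (hbdd u hu)))
      have htend : Tendsto (μ ∘ s) atTop (𝓝 0) := by
        have := tendsto_measure_iInter_atTop hsm hanti ⟨0, measure_ne_top μ _⟩
        rwa [hinter] at this
      obtain ⟨n, hn⟩ := (htend.eventually_lt_const hγ₀pos).exists
      refine ⟨(1 / (n + 1)) / 3, by positivity, fun _ => ?_⟩
      have : {t | M u < f u t + 3 * (1 / (↑n + 1) / 3)} = s n := by
        ext t; simp [hs]; ring_nf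
      rw [this]
      exact hn
    · exact ⟨1, one_pos, fun h => absurd h hu⟩
  choose ε hεpos hεμ using key
  -- compactness of the sphere
  set r : EuclideanSpace ℝ (Fin k) → ℝ := fun u => ε u / (2 * C + 1) with hr
  have hrpos : ∀ u, 0 < r u := fun u => by
    have := hεpos u; positivity
  have hcov : Metric.sphere (0 : EuclideanSpace ℝ (Fin k)) 1 ⊆
      ⋃ u ∈ Metric.sphere (0 : EuclideanSpace ℝ (Fin k)) 1, Metric.ball u (r u) := by
    intro u hu
    exact Set.mem_biUnion hu (Metric.mem_ball_self (hrpos u))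
  obtain ⟨S, hSsub, hSfin, hScov⟩ := (isCompact_sphere (0 : EuclideanSpace ℝ (Fin k)) 1).elim_finite_subcover_image
    (fun u _ => Metric.isOpen_ball) hcov
  rcases S.eq_empty_or_nonempty with hSe | hSne
  · -- empty sphere case
    refine ⟨1, one_pos, fun u hu ε' hε' hε'δ => ?_⟩
    exfalso
    have : u ∈ Metric.sphere (0 : EuclideanSpace ℝ (Fin k)) 1 := by
      simpa [Metric.mem_sphere, dist_zero_right] using hu
    have := hScov this
    simp [hSe] at this
  · obtain ⟨Sf, hSfc⟩ := hSfin.exists_finset_coe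
    have hSfne : Sf.Nonempty := by
      rw [← Finset.coe_nonempty, hSfc]; exact hSne
    refine ⟨Sf.inf' hSfne ε, ?_, ?_⟩
    · exact (Finset.lt_inf'_iff _).2 fun v _ => hεpos v
    · intro u hu ε' hε' hε'δ
      have husph : u ∈ Metric.sphere (0 : EuclideanSpace ℝ (Fin k)) 1 := by
        simpa [Metric.mem_sphere, dist_zero_right] using hu
      obtain ⟨v, hvS, hvball⟩ := Set.mem_iUnion₂.1 (hScov husph)
      have hvS' : v ∈ Sf := by rw [← Finset.mem_coe, hSfc]; exact hvS
      have hv : ‖v‖ = 1 := by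
        have := hSsub hvS
        simpa [Metric.mem_sphere, dist_zero_right] using this
      have hεv : ε' ≤ ε v := le_of_lt (lt_of_lt_of_le hε'δ (Finset.inf'_le _ hvS'))
      have hd : ‖u - v‖ < r v := by
        rwa [Metric.mem_ball, dist_eq_norm] at hvball
      -- key inclusion (a.e.)
      have hsub : ∀ᵐ t ∂μ, t ∈ {t | M u < f u t + ε'} → t ∈ {t | M v < f v t + 3 * ε v} := by
        filter_upwards [hC] with t haC ht
        replace ht : M u < f u t + ε' := ht
        show M v < f v t + 3 * ε v
        have hMvu : M v ≤ M u + C * ‖v - u‖ := hMcomp u v hu hv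
        have hfu : f u t - f v t ≤ C * ‖u - v‖ := by
          have h2 : f u t - f v t = ⟪u - v, a t⟫ := by simp [hf, inner_sub_left]
          rw [h2]
          calc ⟪u - v, a t⟫ ≤ |⟪u - v, a t⟫| := le_abs_self _
            _ ≤ ‖u - v‖ * ‖a t‖ := abs_real_inner_le_norm _ _
            _ ≤ ‖u - v‖ * C := mul_le_mul_of_nonneg_left haC (norm_nonneg _)
            _ = C * ‖u - v‖ := mul_comm _ _
        have hnorm : ‖v - u‖ = ‖u - v‖ := norm_sub_rev _ _
        have hCr : C * ‖u - v‖ ≤ ε v / 2 := by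
          have h1 : C * ‖u - v‖ ≤ C * r v :=
            mul_le_mul_of_nonneg_left (le_of_lt hd) hC0
          have heq : (2 * C + 1) * r v = ε v := by
            have h3 : (0:ℝ) < 2 * C + 1 := by positivity
            rw [show r v = ε v / (2 * C + 1) from rfl]
            field_simp
          have h2 : C * r v ≤ ε v / 2 := by nlinarith [hrpos v]
          linarith
        -- M v ≤ M u + C‖u-v‖ < f u t + ε' + C‖u-v‖ ≤ f v t + 2C‖u-v‖ + ε'
        rw [hnorm] at hMvu
        nlinarith [hεpos v]
      calc μ {t | M u < f u t + ε'} ≤ μ {t | M v < f v t + 3 * ε v} := measure_mono_ae hsub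
        _ < γ₀ := hεμ v hv
        _ ≤ γ := hγ₀le
end

section
/- Let b ∈ Q with closest boundary point b₀ ∈ ∂Q, u = (b₀−b)/|b₀−b|, ε² = |b₀−b|, and E = E_ε^u = {t : S_u < u·a(t) + ε}. There exists c > 0 (independent of b) such that whenever ε < c, ψ_s(b) ≥ μ(E) φ((1−ε)/μ(E)) + μ(X∖E) φ(ε/μ(X∖E)). -/
open MeasureTheory Filter
open scoped RealInnerProductSpace ENNReal

/-- Supporting tangent line lies below a convex function. -/
lemma tangent_le_aux {φ φ' : ℝ → ℝ} (hconv0 : ConvexOn ℝ (Set.Ici 0) φ)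
    (hder : ∀ x ∈ Set.Ioi (0:ℝ), HasDerivAt φ (φ' x) x)
    {m : ℝ} (hm : 0 < m) {x : ℝ} (hx : 0 ≤ x) :
    φ m + φ' m * (x - m) ≤ φ x := by
  rcases lt_trichotomy x m with h | h | h
  · have hs := hconv0.slope_le_of_hasDerivAt (Set.mem_Ici.mpr hx) (Set.mem_Ici.mpr hm.le)
      h (hder m hm)
    rw [slope_def_field] at hs
    have hmx : 0 < m - x := sub_pos.mpr h
    rw [div_le_iff₀ hmx] at hs
    nlinarith
  · simp [h]
  · have hs := hconv0.le_slope_of_hasDerivAt (Set.mem_Ici.mpr hm.le)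
      (Set.mem_Ici.mpr (hm.trans h).le) h (hder m hm)
    rw [slope_def_field] at hs
    have hxm : 0 < x - m := sub_pos.mpr h
    rw [le_div_iff₀ hxm] at hs
    nlinarith

/-- Jensen-type lower bound via the supporting tangent line at the mean. -/
lemma jensen_lower_aux {X : Type*} [MeasurableSpace X] (ν : Measure X) [IsFiniteMeasure ν]
    {φ φ' : ℝ → ℝ} (hconv0 : ConvexOn ℝ (Set.Ici 0) φ)
    (hder : ∀ x ∈ Set.Ioi (0:ℝ), HasDerivAt φ (φ' x) x)
    {f : X → ℝ} (hf : Integrable f ν) (hf0 : 0 ≤ᵐ[ν] f)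
    (hφf : Integrable (fun t => φ (f t)) ν)
    (hpos : 0 < (ν Set.univ).toReal) :
    (ν Set.univ).toReal * φ ((∫ t, f t ∂ν) / (ν Set.univ).toReal) ≤ ∫ t, φ (f t) ∂ν := by
  set V := (ν Set.univ).toReal with hV
  have hI0 : 0 ≤ ∫ t, f t ∂ν := integral_nonneg_of_ae hf0
  rcases eq_or_lt_of_le hI0 with hI | hI
  · have hf00 : f =ᵐ[ν] 0 := (integral_eq_zero_iff_of_nonneg_ae hf0 hf).mp hI.symm
    have hcong : ∫ t, φ (f t) ∂ν = ∫ _t, φ 0 ∂ν :=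
      integral_congr_ae (hf00.mono fun t ht => by
        simp only [Pi.zero_apply] at ht; simp [ht])
    have hm0 : (∫ t, f t ∂ν) / V = 0 := by rw [← hI]; simp
    rw [hcong, hm0, integral_const, smul_eq_mul]
    exact le_rfl
  · set m := (∫ t, f t ∂ν) / V with hmdef
    have hm : 0 < m := div_pos hI hpos
    have key : ∀ᵐ t ∂ν, φ m + φ' m * (f t - m) ≤ φ (f t) :=
      hf0.mono fun t ht => tangent_le_aux hconv0 hder hm ht
    have hint2 : Integrable (fun t => φ' m * (f t - m)) ν := by
      have h := (hf.sub (integrable_const m)).const_mul (φ' m)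
      simpa using h
    have hint : Integrable (fun t => φ m + φ' m * (f t - m)) ν := by
      have h := (integrable_const (φ m) (μ := ν)).add hint2
      simpa using h
    have hmono := integral_mono_ae hint hφf key
    have hexp : ∫ t, (φ m + φ' m * (f t - m)) ∂ν = V * φ m := by
      rw [integral_add (integrable_const _) hint2,
        integral_const, integral_const_mul, integral_sub hf (integrable_const _),
        integral_const, smul_eq_mul, smul_eq_mul]
      have : m * V = ∫ t, f t ∂ν := by
        rw [hmdef]; field_simp
      simp only [Measure.real]
      rw [← hV, ← this]
      ring
    rw [hexp] at hmono
    exact hmono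

/-- A convex function on `[0,∞)` antitone on `(0,x₁]` is antitone on `[0,x₁]`. -/
lemma antitone_ext_aux {φ : ℝ → ℝ} (hconv0 : ConvexOn ℝ (Set.Ici 0) φ) {x₁ : ℝ}
    (hanti : AntitoneOn φ (Set.Ioc 0 x₁)) : AntitoneOn φ (Set.Icc 0 x₁) := by
  intro p hp q hq hpq
  rcases eq_or_lt_of_le hp.1 with h0 | h0
  · rcases eq_or_lt_of_le hpq with hpq' | hpq'
    · rw [hpq']
    · -- p = 0 < q
      have hq0 : 0 < q := by rw [← h0] at hpq'; exact hpq'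
      have hmid : φ ((1/2 : ℝ) • (0:ℝ) + (1/2 : ℝ) • q) ≤
          (1/2 : ℝ) • φ 0 + (1/2 : ℝ) • φ q :=
        hconv0.2 (Set.mem_Ici.mpr le_rfl) (Set.mem_Ici.mpr hq0.le)
          (by norm_num) (by norm_num) (by norm_num)
      have h1 : (1/2 : ℝ) • (0:ℝ) + (1/2 : ℝ) • q = q / 2 := by
        simp only [smul_eq_mul]; ring
      have h2 : φ q ≤ φ (q / 2) :=
        hanti ⟨by linarith, by linarith [hq.2]⟩ ⟨hq0, hq.2⟩ (by linarith)
      rw [h1] at hmid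
      simp only [smul_eq_mul] at hmid
      rw [← h0]
      linarith
  · have hq0 : 0 < q := lt_of_lt_of_le h0 hpq
    exact hanti ⟨h0, hp.2⟩ ⟨hq0, hq.2⟩ hpq

/-- Lower bound for the singular potential near the boundary of `Q`: there is a constant
`c > 0`, independent of `b`, such that whenever `b₀` is a closest boundary point to
`b ∈ Q`, `u = (b₀-b)/|b₀-b|`, `ε² = |b₀-b| < c²` and `E = {t : S_u < u·a(t) + ε}`,
`ψ_s(b) ≥ μ(E) φ((1-ε)/μ(E)) + μ(X∖E) φ(ε/μ(X∖E))`. -/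
theorem singularPotential_lower_bound {X : Type*} [MeasurableSpace X]
    (μ : Measure X) [IsFiniteMeasure μ] {k : ℕ}
    (a : X → EuclideanSpace ℝ (Fin k)) (ha : MemLp a ⊤ μ)
    (φ φ' : ℝ → ℝ)
    (hconv : StrictConvexOn ℝ (Set.Ioi 0) φ) (hconv0 : ConvexOn ℝ (Set.Ici 0) φ)
    (hder : ∀ x ∈ Set.Ioi (0:ℝ), HasDerivAt φ (φ' x) x)
    (hderc : ContinuousOn φ' (Set.Ioi 0))
    (hsuper : Tendsto (fun x => φ x / x) atTop atTop)
    (hder0 : Tendsto φ' (nhdsWithin 0 (Set.Ioi 0)) atBot)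
    -- φ is increasing for sufficiently large argument and decreasing for small argument
    (hφinc : ∃ x₀ : ℝ, 0 < x₀ ∧ MonotoneOn φ (Set.Ici x₀))
    (hφdec : ∃ x₁ : ℝ, 0 < x₁ ∧ AntitoneOn φ (Set.Ioc 0 x₁))
    -- the singular potential and its optimal densities
    (ψ : EuclideanSpace ℝ (Fin k) → ℝ) (ρmin : EuclideanSpace ℝ (Fin k) → X → ℝ)
    (hρP : ∀ b ∈ momentSet μ a, ρmin b ∈ probDens μ)
    (hρgen : ∀ b ∈ momentSet μ a, mom μ a (ρmin b) = b)
    (hρint : ∀ b ∈ momentSet μ a, Integrable (fun t => φ (ρmin b t)) μ)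
    (hψ : ∀ b ∈ momentSet μ a, ψ b = ∫ t, φ (ρmin b t) ∂μ)
    -- assumed: mass concentration near the boundary (Prop. 2.5 of the paper)
    (hconc : ∀ b ∈ momentSet μ a, ∀ b₀ ∈ frontier (momentSet μ a),
      (∀ b' ∈ frontier (momentSet μ a), ‖b₀ - b‖ ≤ ‖b' - b‖) →
      ∀ ε : ℝ, 0 < ε → ε ^ 2 = ‖b₀ - b‖ →
      ∀ ρ ∈ probDens μ, mom μ a ρ = b →
        1 - ε ≤ ∫ t in {s | essSup (fun r => ⟪‖b₀ - b‖⁻¹ • (b₀ - b), a r⟫) μ <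
            ⟪‖b₀ - b‖⁻¹ • (b₀ - b), a s⟫ + ε}, ρ t ∂μ)
    -- assumed: μ(E_ε^u) → 0 uniformly in u
    (huni : ∀ γ : ℝ≥0∞, 0 < γ → ∃ δ : ℝ, 0 < δ ∧
      ∀ u : EuclideanSpace ℝ (Fin k), ‖u‖ = 1 → ∀ ε : ℝ, 0 < ε → ε < δ →
        μ {t | essSup (fun s => ⟪u, a s⟫) μ < ⟪u, a t⟫ + ε} < γ) :
    ∃ c : ℝ, 0 < c ∧ ∀ b ∈ momentSet μ a, ∀ b₀ ∈ frontier (momentSet μ a),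
      (∀ b' ∈ frontier (momentSet μ a), ‖b₀ - b‖ ≤ ‖b' - b‖) →
      ∀ ε : ℝ, 0 < ε → ε ^ 2 = ‖b₀ - b‖ → ε < c →
      let u := ‖b₀ - b‖⁻¹ • (b₀ - b)
      let E := {t | essSup (fun s => ⟪u, a s⟫) μ < ⟪u, a t⟫ + ε}
      (μ E).toReal * φ ((1 - ε) / (μ E).toReal) +
          (μ Eᶜ).toReal * φ (ε / (μ Eᶜ).toReal) ≤ ψ b := by
  obtain ⟨x₀, hx₀, hmono⟩ := hφinc
  obtain ⟨x₁, hx₁, hanti'⟩ := hφdec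
  have hanti : AntitoneOn φ (Set.Icc 0 x₁) := antitone_ext_aux hconv0 hanti'
  by_cases hμ0 : μ = 0
  · refine ⟨1, one_pos, ?_⟩
    intro b hb
    exfalso
    obtain ⟨ρ, hρ, -⟩ := hb
    have h1 := hρ.2.2
    rw [hμ0, integral_zero_measure] at h1
    exact one_ne_zero h1.symm
  have hMpos : (0:ℝ≥0∞) < μ Set.univ := Measure.measure_univ_pos.mpr hμ0
  set Mr := (μ Set.univ).toReal with hMr
  have hMrpos : 0 < Mr := ENNReal.toReal_pos hMpos.ne' (measure_ne_top _ _)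
  set γ : ℝ≥0∞ := min (ENNReal.ofReal (1/(2*x₀))) (μ Set.univ / 2) with hγdef
  have hγpos : 0 < γ := by
    refine lt_min (ENNReal.ofReal_pos.mpr (by positivity)) ?_
    exact ENNReal.div_pos hMpos.ne' (by norm_num)
  obtain ⟨δ, hδpos, hδE⟩ := huni γ hγpos
  refine ⟨min δ (min (1/2) (x₁ * Mr / 2)),
    lt_min hδpos (lt_min (by norm_num) (by positivity)), ?_⟩
  intro b hb b₀ hb₀ hmin ε hε hε2 hεc
  intro u E
  have hεδ : ε < δ := lt_of_lt_of_le hεc (min_le_left _ _)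
  have hε12 : ε < 1/2 := lt_of_lt_of_le hεc ((min_le_right _ _).trans (min_le_left _ _))
  have hεx1 : ε < x₁ * Mr / 2 := lt_of_lt_of_le hεc ((min_le_right _ _).trans (min_le_right _ _))
  have hbb : (0:ℝ) < ‖b₀ - b‖ := by rw [← hε2]; positivity
  have hu : ‖u‖ = 1 := by
    show ‖‖b₀ - b‖⁻¹ • (b₀ - b)‖ = 1
    rw [norm_smul, norm_inv, norm_norm, inv_mul_cancel₀ hbb.ne']
  have hEγ : μ E < γ := hδE u hu ε hε hεδ
  obtain ⟨hρi, hρ0, hρ1⟩ := hρP b hb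
  have hφρi := hρint b hb
  have hIE0 : 1 - ε ≤ ∫ t in E, ρmin b t ∂μ :=
    hconc b hb b₀ hb₀ hmin ε hε hε2 (ρmin b) (hρP b hb) (hρgen b hb)
  -- a measurable version of `E`
  obtain ⟨g, hgm, hga⟩ := ha.1
  set E' := {t | essSup (fun s => ⟪u, a s⟫) μ < ⟪u, g t⟫ + ε} with hE'def
  have hE'm : MeasurableSet E' := by
    have hin : Measurable fun t => ⟪u, g t⟫ := measurable_const.inner hgm.measurable
    exact measurableSet_lt measurable_const (hin.add measurable_const)
  have hEE' : E =ᵐ[μ] E' := by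
    rw [Filter.eventuallyEq_set]
    filter_upwards [hga] with t ht
    show essSup (fun s => ⟪u, a s⟫) μ < ⟪u, a t⟫ + ε ↔ _
    rw [ht]
    exact Iff.rfl
  have hrE : μ.restrict E = μ.restrict E' := Measure.restrict_congr_set hEE'
  have hEE'c : (Eᶜ : Set X) =ᵐ[μ] (E'ᶜ : Set X) := by
    rw [Filter.eventuallyEq_set] at hEE' ⊢
    filter_upwards [hEE'] with t ht
    simp [Set.mem_compl_iff, ht]
  have hmE : μ E = μ E' := measure_congr hEE'
  have hmEc : μ Eᶜ = μ E'ᶜ := measure_congr hEE'c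
  have hE'γ : μ E' < γ := hmE ▸ hEγ
  have h1 : (μ E').toReal < 1/(2*x₀) :=
    ENNReal.toReal_lt_of_lt_ofReal (lt_of_lt_of_le hE'γ (min_le_left _ _))
  have hEfin : μ E' ≠ ⊤ := measure_ne_top _ _
  have h2r : (μ E').toReal < Mr/2 := by
    have h2 : μ E' < μ Set.univ / 2 := lt_of_lt_of_le hE'γ (min_le_right _ _)
    have hhalf : μ Set.univ / 2 ≠ ⊤ :=
      ne_top_of_le_ne_top (measure_ne_top _ _) (ENNReal.half_le_self)
    have := (ENNReal.toReal_lt_toReal hEfin hhalf).mpr h2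
    rwa [ENNReal.toReal_div, show ((2:ℝ≥0∞)).toReal = (2:ℝ) by norm_num] at this
  have hcomb : Mr ≤ (μ E').toReal + (μ E'ᶜ).toReal := by
    have hsum := measure_add_measure_compl hE'm (μ := μ)
    rw [hMr, ← hsum, ENNReal.toReal_add hEfin (measure_ne_top _ _)]
  have hEc_lb : Mr/2 < (μ E'ᶜ).toReal := by linarith
  have hEc_pos : 0 < (μ E'ᶜ).toReal := lt_trans (by positivity) hEc_lb
  -- integrals of the optimal density
  have hIE : 1 - ε ≤ ∫ t in E', ρmin b t ∂μ := by rw [← hrE]; exact hIE0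
  have hsum1 : (∫ t in E', ρmin b t ∂μ) + ∫ t in E'ᶜ, ρmin b t ∂μ = 1 := by
    rw [integral_add_compl hE'm hρi, hρ1]
  have hIc0 : 0 ≤ ∫ t in E'ᶜ, ρmin b t ∂μ := integral_nonneg_of_ae (ae_restrict_of_ae hρ0)
  have hIcε : ∫ t in E'ᶜ, ρmin b t ∂μ ≤ ε := by linarith
  have hE'pos : 0 < (μ E').toReal := by
    by_contra h
    push_neg at h
    have hz0 : (μ E').toReal = 0 := le_antisymm h ENNReal.toReal_nonneg
    have hz : μ E' = 0 := by
      rcases (ENNReal.toReal_eq_zero_iff _).mp hz0 with h' | h'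
      · exact h'
      · exact absurd h' hEfin
    have hres : μ.restrict E' = 0 := Measure.restrict_eq_zero.mpr hz
    rw [hres, integral_zero_measure] at hIE
    linarith
  -- Jensen on E'
  have hJE := jensen_lower_aux (μ.restrict E') hconv0 hder hρi.restrict
    (ae_restrict_of_ae hρ0) hφρi.restrict
    (by simpa [Measure.restrict_apply_univ] using hE'pos)
  simp only [Measure.restrict_apply_univ] at hJE
  have hx₀le : x₀ ≤ (1 - ε) / (μ E').toReal := by
    rw [le_div_iff₀ hE'pos]
    have hxx : x₀ * (1/(2*x₀)) = 1/2 := by field_simp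
    nlinarith [mul_lt_mul_of_pos_left h1 hx₀]
  have hdiv_le : (1 - ε) / (μ E').toReal ≤ (∫ t in E', ρmin b t ∂μ) / (μ E').toReal := by
    gcongr
  have hstep1 : (μ E').toReal * φ ((1 - ε)/(μ E').toReal) ≤ ∫ t in E', φ (ρmin b t) ∂μ := by
    refine le_trans (mul_le_mul_of_nonneg_left
      (hmono (Set.mem_Ici.mpr hx₀le) (Set.mem_Ici.mpr (hx₀le.trans hdiv_le)) hdiv_le)
      ENNReal.toReal_nonneg) hJE
  -- Jensen on E'ᶜ
  have hJEc := jensen_lower_aux (μ.restrict E'ᶜ) hconv0 hder hρi.restrict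
    (ae_restrict_of_ae hρ0) hφρi.restrict
    (by simpa [Measure.restrict_apply_univ] using hEc_pos)
  simp only [Measure.restrict_apply_univ] at hJEc
  have hεx : ε / (μ E'ᶜ).toReal ≤ x₁ := by
    rw [div_le_iff₀ hEc_pos]
    nlinarith
  have hdivc : (∫ t in E'ᶜ, ρmin b t ∂μ) / (μ E'ᶜ).toReal ≤ ε / (μ E'ᶜ).toReal := by
    gcongr
  have hmem2 : (∫ t in E'ᶜ, ρmin b t ∂μ) / (μ E'ᶜ).toReal ∈ Set.Icc (0:ℝ) x₁ :=
    ⟨by positivity, hdivc.trans hεx⟩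
  have hmem1 : ε / (μ E'ᶜ).toReal ∈ Set.Icc (0:ℝ) x₁ := ⟨by positivity, hεx⟩
  have hstep2 : (μ E'ᶜ).toReal * φ (ε/(μ E'ᶜ).toReal) ≤ ∫ t in E'ᶜ, φ (ρmin b t) ∂μ :=
    le_trans (mul_le_mul_of_nonneg_left (hanti hmem2 hmem1 hdivc) ENNReal.toReal_nonneg) hJEc
  rw [hψ b hb, ← integral_add_compl hE'm hφρi, hmE, hmEc]
  exact add_le_add hstep1 hstep2
end

section
/- Suppose φ is entropy-like, C² on (0,∞) with φ'' > 0 everywhere. For (α,λ) ∈ ℝ × ℝᵏ define h(α,λ) = ∫_X (1, a(t)) (φ')^{-1}(α + λ·a(t)) dμ(t) ∈ ℝ^{k+1}. Then the Jacobian matrix ∂h/∂(α,λ) = ∫_X (1,a(t)) ⊗ (1,a(t)) [φ''((φ')^{-1}(α+λ·a(t)))]^{-1} dμ(t) is invertible (positive definite) at every (α,λ). -/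
open MeasureTheory

/-- The constraint vector `(1, a(t))` augmented by the constant function `1`. -/
noncomputable def aug {X : Type*} {k : ℕ} (a : X → EuclideanSpace ℝ (Fin k)) (t : X) :
    Fin (k + 1) → ℝ :=
  Fin.cons 1 fun i => a t i

/-- Positive definiteness (hence invertibility) of the Jacobian of the dual-to-moment map:
for an entropy-like `φ` which is `C²` on `(0,∞)` with `φ'' > 0`, and `g = (φ')⁻¹`, the
matrix `∫ (1,a)⊗(1,a) [φ''(g(α + λ·a))]⁻¹ dμ` is positive definite; the pseudo-Haar
property enters as: `ξ·(1,a(t)) = 0` a.e. forces `ξ = 0`. -/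
theorem dual_jacobian_posDef {X : Type*} [MeasurableSpace X]
    (μ : Measure X) [IsFiniteMeasure μ] {k : ℕ}
    (a : X → EuclideanSpace ℝ (Fin k)) (ha : MemLp a ⊤ μ)
    (φ φ' φ'' g : ℝ → ℝ)
    (hder : ∀ x ∈ Set.Ioi (0:ℝ), HasDerivAt φ (φ' x) x)
    (hder2 : ∀ x ∈ Set.Ioi (0:ℝ), HasDerivAt φ' (φ'' x) x)
    (hpos : ∀ x ∈ Set.Ioi (0:ℝ), 0 < φ'' x)
    (hg : ∀ y : ℝ, g y ∈ Set.Ioi (0:ℝ) ∧ φ' (g y) = y)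
    (hph : ∀ ξ : Fin (k + 1) → ℝ,
      (∀ᵐ t ∂μ, ∑ i, ξ i * aug a t i = 0) → ξ = 0)
    (α : ℝ) (lam : Fin k → ℝ)
    (M : Matrix (Fin (k + 1)) (Fin (k + 1)) ℝ)
    (hM : ∀ i j, M i j =
      ∫ t, aug a t i * aug a t j * (φ'' (g (α + ∑ i', lam i' * a t i')))⁻¹ ∂μ)
    (hint : ∀ i j, Integrable
      (fun t => aug a t i * aug a t j * (φ'' (g (α + ∑ i', lam i' * a t i')))⁻¹) μ) :
    M.PosDef := by
  set w : X → ℝ := fun t => (φ'' (g (α + ∑ i', lam i' * a t i')))⁻¹ with hw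
  have hwpos : ∀ t, 0 < w t := fun t => inv_pos.2 (hpos _ (hg _).1)
  have key : ∀ x : Fin (k + 1) → ℝ,
      dotProduct x (M.mulVec x) = ∫ t, (∑ i, x i * aug a t i) ^ 2 * w t ∂μ := by
    intro x
    have hexp : ∀ t, (∑ i, x i * aug a t i) ^ 2 * w t
        = ∑ i, ∑ j, (x i * x j) * (aug a t i * aug a t j * w t) := by
      intro t
      rw [sq, Finset.sum_mul_sum, Finset.sum_mul]
      refine Finset.sum_congr rfl fun i _ => ?_
      rw [Finset.sum_mul]
      exact Finset.sum_congr rfl fun j _ => by ring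
    have hintf : ∀ i j, Integrable
        (fun t => (x i * x j) * (aug a t i * aug a t j * w t)) μ :=
      fun i j => (hint i j).const_mul _
    calc dotProduct x (M.mulVec x)
        = ∑ i, ∑ j, (x i * x j) * M i j := by
          simp only [dotProduct, Matrix.mulVec, dotProduct, Finset.mul_sum]
          exact Finset.sum_congr rfl fun i _ => Finset.sum_congr rfl fun j _ => by ring
      _ = ∑ i, ∑ j, ∫ t, (x i * x j) * (aug a t i * aug a t j * w t) ∂μ := by
          refine Finset.sum_congr rfl fun i _ => Finset.sum_congr rfl fun j _ => ?_
          rw [hM i j, ← integral_const_mul]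
      _ = ∑ i, ∫ t, ∑ j, (x i * x j) * (aug a t i * aug a t j * w t) ∂μ := by
          exact Finset.sum_congr rfl fun i _ =>
            (integral_finset_sum _ (fun j _ => hintf i j)).symm
      _ = ∫ t, ∑ i, ∑ j, (x i * x j) * (aug a t i * aug a t j * w t) ∂μ :=
          (integral_finset_sum _ (fun i _ =>
            integrable_finset_sum _ (fun j _ => hintf i j))).symm
      _ = ∫ t, (∑ i, x i * aug a t i) ^ 2 * w t ∂μ :=
          integral_congr_ae (Filter.Eventually.of_forall fun t => (hexp t).symm)
  rw [Matrix.posDef_iff_dotProduct_mulVec]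
  constructor
  · ext i j
    simp only [Matrix.conjTranspose_apply, star_trivial]
    rw [hM i j, hM j i]
    refine integral_congr_ae (Filter.Eventually.of_forall fun t => ?_)
    ring
  · intro x hx
    rw [star_trivial, key x]
    have hnn : 0 ≤ᵐ[μ] fun t => (∑ i, x i * aug a t i) ^ 2 * w t :=
      Filter.Eventually.of_forall fun t => mul_nonneg (sq_nonneg _) (hwpos t).le
    have hintf : Integrable (fun t => (∑ i, x i * aug a t i) ^ 2 * w t) μ := by
      have : (fun t => (∑ i, x i * aug a t i) ^ 2 * w t)
          = fun t => ∑ i, ∑ j, (x i * x j) * (aug a t i * aug a t j * w t) := by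
        funext t
        rw [sq, Finset.sum_mul_sum, Finset.sum_mul]
        refine Finset.sum_congr rfl fun i _ => ?_
        rw [Finset.sum_mul]
        exact Finset.sum_congr rfl fun j _ => by ring
      rw [this]
      exact integrable_finset_sum _ fun i _ =>
        integrable_finset_sum _ fun j _ => (hint i j).const_mul _
    have hpos0 : 0 ≤ ∫ t, (∑ i, x i * aug a t i) ^ 2 * w t ∂μ :=
      integral_nonneg_of_ae hnn
    rcases hpos0.lt_or_eq with h | h
    · exact h
    · exfalso
      have hz : (fun t => (∑ i, x i * aug a t i) ^ 2 * w t) =ᵐ[μ] 0 :=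
        (integral_eq_zero_iff_of_nonneg_ae hnn hintf).mp h.symm
      have : ∀ᵐ t ∂μ, ∑ i, x i * aug a t i = 0 := by
        filter_upwards [hz] with t ht
        have : (∑ i, x i * aug a t i) ^ 2 * w t = 0 := ht
        have h2 : (∑ i, x i * aug a t i) ^ 2 = 0 := by
          rcases mul_eq_zero.mp this with h' | h'
          · exact h'
          · exact absurd h' (hwpos t).ne'
        exact pow_eq_zero_iff (n := 2) (by norm_num) |>.mp h2
      exact hx (hph x this)
end

section
/- Consider the mean-field free energy I_P(ρ) = T∫_X ρ ln ρ dμ − (1/2) K b_ρ · b_ρ with T > 0 and K a positive semidefinite symmetric k×k matrix, and suppose the a_i are L²-orthonormal and orthogonal to constants. If T > ‖a‖_∞² λ_max(K) then the Hessian of I_Q(b) = Tψ_s(b) − (1/2)Kb·b is positive definite on all of Q, so I_Q is strictly convex, the isotropic state b = 0 is the unique critical point and the global minimizer. -/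
open MeasureTheory
open scoped RealInnerProductSpace
open scoped Matrix

variable {k : ℕ}

local notation "E" => EuclideanSpace ℝ (Fin k)

/-- quadratic form of CLM vs matrix dotProduct -/
lemma quadCLM_eq (A : Matrix (Fin k) (Fin k) ℝ) (x : EuclideanSpace ℝ (Fin k)) :
    ⟪Matrix.toEuclideanCLM (𝕜 := ℝ) A x, x⟫ =
      dotProduct (star (WithLp.equiv 2 _ x)) (A *ᵥ (WithLp.equiv 2 _ x)) := by
  rw [EuclideanSpace.inner_eq_star_dotProduct, Matrix.ofLp_toEuclideanCLM]
  simp [dotProduct_comm]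

lemma symmCLM (A : Matrix (Fin k) (Fin k) ℝ) (hA : A.IsHermitian)
    (u w : EuclideanSpace ℝ (Fin k)) :
    ⟪Matrix.toEuclideanCLM (𝕜 := ℝ) A u, w⟫ = ⟪u, Matrix.toEuclideanCLM (𝕜 := ℝ) A w⟫ := by
  have h := Matrix.isHermitian_iff_isSymmetric.mp hA
  have h1 : (Matrix.toEuclideanCLM (𝕜 := ℝ) A) u = Matrix.toEuclideanLin A u := by
    rw [← Matrix.coe_toEuclideanCLM_eq_toEuclideanLin]; rfl
  have h2 : (Matrix.toEuclideanCLM (𝕜 := ℝ) A) w = Matrix.toEuclideanLin A w := by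
    rw [← Matrix.coe_toEuclideanCLM_eq_toEuclideanLin]; rfl
  rw [h1, h2]; exact h u w

lemma inv_quad_lower {S : Matrix (Fin k) (Fin k) ℝ} (hS : S.PosDef) {M : ℝ}
    (hle : ∀ x : EuclideanSpace ℝ (Fin k),
      ⟪Matrix.toEuclideanCLM (𝕜 := ℝ) S x, x⟫ ≤ M ^ 2 * ‖x‖ ^ 2)
    (x : EuclideanSpace ℝ (Fin k)) (hx : x ≠ 0) :
    ‖x‖ ^ 2 / M ^ 2 ≤ ⟪Matrix.toEuclideanCLM (𝕜 := ℝ) S⁻¹ x, x⟫ := by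
  set Sc := Matrix.toEuclideanCLM (𝕜 := ℝ) S with hSc
  set Tc := Matrix.toEuclideanCLM (𝕜 := ℝ) S⁻¹ with hTc
  have hcomp : ∀ u : EuclideanSpace ℝ (Fin k), Sc (Tc u) = u := by
    intro u
    have hmul : S * S⁻¹ = 1 := Matrix.mul_nonsing_inv S (hS.det_pos.ne'.isUnit)
    have : Sc * Tc = 1 := by
      rw [hSc, hTc, ← _root_.map_mul, hmul, _root_.map_one]
    calc Sc (Tc u) = (Sc * Tc) u := rfl
    _ = u := by rw [this]; rfl
  -- positivity of ⟪Sc x, x⟫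
  have hxpos : 0 < ⟪Sc x, x⟫ := by
    rw [hSc, quadCLM_eq]
    refine hS.dotProduct_mulVec_pos fun h => hx ?_
    have := congrArg (WithLp.equiv 2 (Fin k → ℝ)).symm h
    simpa using this
  have hsymm := symmCLM S hS.isHermitian
  set c := ⟪Sc x, x⟫ with hc
  set y := Tc x with hy
  set t := ‖x‖ ^ 2 / c with ht
  have hpsd : 0 ≤ ⟪Sc (y - t • x), y - t • x⟫ := by
    rw [hSc, quadCLM_eq]
    exact hS.posSemidef.dotProduct_mulVec_nonneg _
  have hSy : Sc y = x := hcomp x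
  have h1 : ⟪Sc x, y⟫ = ‖x‖ ^ 2 := by
    rw [hsymm, hSy, real_inner_self_eq_norm_sq]
  have h2 : ⟪x, y⟫ = ⟪Tc x, x⟫ := real_inner_comm _ _
  have hexp : ⟪Sc (y - t • x), y - t • x⟫
      = ⟪Tc x, x⟫ - 2 * t * ‖x‖ ^ 2 + t ^ 2 * c := by
    rw [map_sub, _root_.map_smul, inner_sub_left, inner_sub_right, inner_sub_right,
      real_inner_smul_left, real_inner_smul_right, real_inner_smul_left,
      real_inner_smul_right, hSy, h1, h2, ← hc]
    rw [real_inner_comm x y, h2, real_inner_self_eq_norm_sq x]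
    ring
  have hnx : (0:ℝ) < ‖x‖ ^ 2 := pow_pos (norm_pos_iff.mpr hx) 2
  have hcle : c ≤ M ^ 2 * ‖x‖ ^ 2 := hle x
  have hM2 : 0 < M ^ 2 := by nlinarith [hxpos, hcle, hnx, sq_nonneg M]
  have hI : ‖x‖ ^ 2 * (‖x‖ ^ 2 / c) ≤ ⟪Tc x, x⟫ := by
    rw [ht] at hpsd
    have e : 2 * (‖x‖ ^ 2 / c) * ‖x‖ ^ 2 - (‖x‖ ^ 2 / c) ^ 2 * c = ‖x‖ ^ 2 * (‖x‖ ^ 2 / c) := by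
      field_simp; ring
    linarith [hpsd, e]
  have hgoal : ‖x‖ ^ 2 / M ^ 2 ≤ ‖x‖ ^ 2 * (‖x‖ ^ 2 / c) := by
    rw [div_le_iff₀ hM2]
    have h4 : ‖x‖ ^ 2 * (‖x‖ ^ 2 / c) * M ^ 2 * c = ‖x‖ ^ 2 * (M ^ 2 * ‖x‖ ^ 2) := by
      field_simp
    nlinarith [h4, mul_le_mul_of_nonneg_left hcle (le_of_lt hnx), hxpos]
  linarith [hgoal, hI]


set_option maxHeartbeats 1000000 in
/-- Mean-field free energy `I_Q(b) = T ψ_s(b) − (1/2) Kb·b`: if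
`T > ‖a‖_∞² λ_max(K)` then the Hessian `T (Cov b)⁻¹ − K` of `I_Q` is positive definite on
all of `Q`, `I_Q` is strictly convex, and the isotropic state `b = 0` is its unique
critical point and global minimiser.  Here `Cov b = ∫ a⊗a ρ_b dμ − b⊗b` is the covariance
matrix (the inverse Hessian of `ψ_s`), satisfying `Cov b ≤ ‖a‖_∞² I` in the Loewner
order, `gψ` is the gradient of `ψ_s` (vanishing at `0` since the constraint functions are
orthogonal to constants), and `λ_max(K)` is encoded by the quadratic-form bound. -/
theorem meanField_global_stability {k : ℕ}
    (Q : Set (EuclideanSpace ℝ (Fin k)))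
    (hQo : IsOpen Q) (hQc : Convex ℝ Q) (hQb : Bornology.IsBounded Q)
    (h0Q : (0 : EuclideanSpace ℝ (Fin k)) ∈ Q)
    (ψ : EuclideanSpace ℝ (Fin k) → ℝ)
    (gψ : EuclideanSpace ℝ (Fin k) → EuclideanSpace ℝ (Fin k))
    (hψd : ∀ b ∈ Q, HasGradientAt ψ (gψ b) b)
    (hgψ0 : gψ 0 = 0)
    (Cov : EuclideanSpace ℝ (Fin k) → Matrix (Fin k) (Fin k) ℝ)
    (hCovPD : ∀ b ∈ Q, (Cov b).PosDef)
    (hHess : ∀ b ∈ Q, HasFDerivAt gψ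
      ((Matrix.toEuclideanCLM (𝕜 := ℝ) ((Cov b)⁻¹) :
        EuclideanSpace ℝ (Fin k) →L[ℝ] EuclideanSpace ℝ (Fin k))) b)
    (M : ℝ) (hM : 0 ≤ M)
    (hCovle : ∀ b ∈ Q, ∀ x : EuclideanSpace ℝ (Fin k),
      ⟪Matrix.toEuclideanCLM (𝕜 := ℝ) (Cov b) x, x⟫ ≤ M ^ 2 * ‖x‖ ^ 2)
    (K : Matrix (Fin k) (Fin k) ℝ) (hKsymm : K.IsSymm) (hKpsd : K.PosSemidef)
    (lmax : ℝ)
    (hlmax : ∀ x : EuclideanSpace ℝ (Fin k),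
      ⟪Matrix.toEuclideanCLM (𝕜 := ℝ) K x, x⟫ ≤ lmax * ‖x‖ ^ 2)
    (T : ℝ) (hT0 : 0 < T) (hT : M ^ 2 * lmax < T) :
    let IQ : EuclideanSpace ℝ (Fin k) → ℝ :=
      fun b => T * ψ b - (1 / 2) * ⟪Matrix.toEuclideanCLM (𝕜 := ℝ) K b, b⟫
    (∀ b ∈ Q, (T • (Cov b)⁻¹ - K).PosDef) ∧
    StrictConvexOn ℝ Q IQ ∧
    (∀ b ∈ Q, T • gψ b - Matrix.toEuclideanCLM (𝕜 := ℝ) K b = 0 → b = 0) ∧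
    (∀ b ∈ Q, IQ 0 ≤ IQ b) := by
  intro IQ
  classical
  set KC : EuclideanSpace ℝ (Fin k) →L[ℝ] EuclideanSpace ℝ (Fin k) :=
    Matrix.toEuclideanCLM (𝕜 := ℝ) K with hKC
  set g : EuclideanSpace ℝ (Fin k) → EuclideanSpace ℝ (Fin k) :=
    fun b => T • gψ b - KC b with hg
  set A : EuclideanSpace ℝ (Fin k) → (EuclideanSpace ℝ (Fin k) →L[ℝ] EuclideanSpace ℝ (Fin k)) :=
    fun b => T • (Matrix.toEuclideanCLM (𝕜 := ℝ) (Cov b)⁻¹) - KC with hA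
  have posA : ∀ b ∈ Q, ∀ v : EuclideanSpace ℝ (Fin k), v ≠ 0 → 0 < ⟪A b v, v⟫ := by
    intro b hb v hv
    have h1 := inv_quad_lower (hCovPD b hb) (hCovle b hb) v hv
    have h2 := hlmax v
    have hnv : (0:ℝ) < ‖v‖ ^ 2 := pow_pos (norm_pos_iff.mpr hv) 2
    have hc : 0 < ⟪Matrix.toEuclideanCLM (𝕜 := ℝ) (Cov b) v, v⟫ := by
      rw [quadCLM_eq]
      refine (hCovPD b hb).dotProduct_mulVec_pos fun h => hv ?_
      have := congrArg (WithLp.equiv 2 (Fin k → ℝ)).symm h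
      simpa using this
    have hM2 : 0 < M ^ 2 := by nlinarith [hCovle b hb v, hc, hnv, sq_nonneg M]
    have expand : ⟪A b v, v⟫
        = T * ⟪Matrix.toEuclideanCLM (𝕜 := ℝ) (Cov b)⁻¹ v, v⟫ - ⟪KC v, v⟫ := by
      simp [hA, inner_sub_left, real_inner_smul_left, ContinuousLinearMap.smul_apply,
        ContinuousLinearMap.sub_apply, Finset.mul_sum, mul_assoc]
    rw [expand]
    have h3 : lmax * ‖v‖ ^ 2 < T * ‖v‖ ^ 2 / M ^ 2 :=
      (lt_div_iff₀ hM2).mpr (by nlinarith [hT, hnv])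
    have h4 : T * (‖v‖ ^ 2 / M ^ 2) ≤ T * ⟪Matrix.toEuclideanCLM (𝕜 := ℝ) (Cov b)⁻¹ v, v⟫ :=
      mul_le_mul_of_nonneg_left h1 (le_of_lt hT0)
    have h5 : T * (‖v‖ ^ 2 / M ^ 2) = T * ‖v‖ ^ 2 / M ^ 2 := by rw [mul_div_assoc]
    linarith
  -- conclusion 1
  have concl1 : ∀ b ∈ Q, (T • (Cov b)⁻¹ - K).PosDef := by
    intro b hb
    refine Matrix.PosDef.of_dotProduct_mulVec_pos ?_ ?_
    · rw [Matrix.IsHermitian, Matrix.conjTranspose_sub, Matrix.conjTranspose_smul,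
        (hCovPD b hb).inv.isHermitian.eq, hKpsd.1.eq, star_trivial]
    · intro x hx
      set x' : EuclideanSpace ℝ (Fin k) := (WithLp.equiv 2 _).symm x with hx'
      have hxne : x' ≠ 0 := fun h => hx (by simpa [hx'] using congrArg (WithLp.equiv 2 _) h)
      have hb1 : Matrix.toEuclideanCLM (𝕜 := ℝ) (T • (Cov b)⁻¹ - K) = A b := by
        rw [map_sub, _root_.map_smul]
      have := posA b hb x' hxne
      rw [← hb1, quadCLM_eq] at this
      simpa [hx'] using this
  -- line derivatives
  have hc' : ∀ (x v : EuclideanSpace ℝ (Fin k)) (t : ℝ),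
      HasDerivAt (fun s : ℝ => x + s • v) v t := by
    intro x v t
    simpa using ((hasDerivAt_id t).smul_const v).const_add x
  have hlineIQ : ∀ (x v : EuclideanSpace ℝ (Fin k)) (t : ℝ), x + t • v ∈ Q →
      HasDerivAt (fun s : ℝ => IQ (x + s • v)) ⟪g (x + t • v), v⟫ t := by
    intro x v t hmem
    have hcd := hc' x v t
    have hψ' : HasDerivAt (fun s : ℝ => ψ (x + s • v)) ⟪gψ (x + t • v), v⟫ t := by
      have h1 := hasGradientAt_iff_hasFDerivAt.mp (hψd _ hmem)
      have h2 := h1.comp_hasDerivAt t hcd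
      simpa [InnerProductSpace.toDual_apply_apply, Function.comp_def] using h2
    have hK' : HasDerivAt (fun s : ℝ => ⟪KC (x + s • v), x + s • v⟫)
        (⟪KC (x + t • v), v⟫ + ⟪KC v, x + t • v⟫) t := by
      have hf : HasDerivAt (fun s : ℝ => KC (x + s • v)) (KC v) t :=
        KC.hasFDerivAt.comp_hasDerivAt t hcd
      exact HasDerivAt.inner ℝ hf hcd
    have hcomb := (hψ'.const_mul T).sub (hK'.const_mul ((1:ℝ)/2))
    have hfun : (fun s : ℝ => IQ (x + s • v))
        = fun s : ℝ => T * ψ (x + s • v) - 1 / 2 * ⟪KC (x + s • v), x + s • v⟫ := rfl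
    rw [hfun]
    refine HasDerivAt.congr_deriv hcomb ?_
    have hs : ⟪KC v, x + t • v⟫ = ⟪KC (x + t • v), v⟫ := by
      rw [hKC, symmCLM K hKpsd.1, real_inner_comm]
    simp only [hg, inner_sub_left, real_inner_smul_left]
    rw [hs]
    ring
  have hlineg : ∀ (x v : EuclideanSpace ℝ (Fin k)) (t : ℝ), x + t • v ∈ Q →
      HasDerivAt (fun s : ℝ => ⟪g (x + s • v), v⟫) ⟪A (x + t • v) v, v⟫ t := by
    intro x v t hmem
    have hcd := hc' x v t
    have hgF : HasFDerivAt g (A (x + t • v)) (x + t • v) :=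
      ((hHess _ hmem).const_smul T).sub KC.hasFDerivAt
    have h2 : HasDerivAt (fun s : ℝ => g (x + s • v)) (A (x + t • v) v) t :=
      by have := hgF.comp_hasDerivAt t hcd; exact this
    have h3 := HasDerivAt.inner ℝ h2 (hasDerivAt_const t v)
    simpa using h3
  have hseg : ∀ x ∈ Q, ∀ y ∈ Q, ∀ t ∈ Set.Icc (0:ℝ) 1, x + t • (y - x) ∈ Q := by
    intro x hx y hy t ht
    have h := hQc hx hy (by linarith [ht.2] : (0:ℝ) ≤ 1 - t) ht.1 (by ring)
    have e : x + t • (y - x) = (1 - t) • x + t • y := by module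
    rw [e]; exact h
  -- strict monotonicity of g
  have mono : ∀ x ∈ Q, ∀ y ∈ Q, x ≠ y → 0 < ⟪g y - g x, y - x⟫ := by
    intro x hx y hy hxy
    set v := y - x with hv
    have hvne : v ≠ 0 := sub_ne_zero.mpr (Ne.symm hxy)
    set φ := fun t : ℝ => ⟪g (x + t • v), v⟫ with hφ
    have hmem : ∀ t ∈ Set.Icc (0:ℝ) 1, x + t • v ∈ Q := fun t ht => hseg x hx y hy t ht
    have hd : ∀ t ∈ Set.Icc (0:ℝ) 1, HasDerivAt φ ⟪A (x + t • v) v, v⟫ t :=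
      fun t ht => hlineg x v t (hmem t ht)
    have hcont : ContinuousOn φ (Set.Icc 0 1) :=
      fun t ht => (hd t ht).continuousAt.continuousWithinAt
    have hmono : StrictMonoOn φ (Set.Icc (0:ℝ) 1) := by
      apply strictMonoOn_of_deriv_pos (convex_Icc 0 1) hcont
      intro t ht
      rw [interior_Icc] at ht
      have ht' : t ∈ Set.Icc (0:ℝ) 1 := ⟨le_of_lt ht.1, le_of_lt ht.2⟩
      rw [(hd t ht').deriv]
      exact posA _ (hmem t ht') v hvne
    have h01 := hmono (Set.left_mem_Icc.mpr zero_le_one)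
      (Set.right_mem_Icc.mpr zero_le_one) zero_lt_one
    have e0 : φ 0 = ⟪g x, v⟫ := by simp [hφ]
    have e1 : φ 1 = ⟪g y, v⟫ := by
      have e : x + (1:ℝ) • v = y := by rw [hv]; module
      simp only [hφ, e]
    rw [inner_sub_left]
    rw [e0, e1] at h01
    linarith
  -- strict convexity
  have sc : StrictConvexOn ℝ Q IQ := by
    refine ⟨hQc, ?_⟩
    intro x hx y hy hxy a b ha hb hab
    set v := y - x with hv
    have hmem : ∀ t ∈ Set.Icc (0:ℝ) 1, x + t • v ∈ Q := fun t ht => hseg x hx y hy t ht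
    set h : ℝ → ℝ := fun s : ℝ => IQ (x + s • v) with hh
    have hd : ∀ t ∈ Set.Icc (0:ℝ) 1, HasDerivAt h ⟪g (x + t • v), v⟫ t :=
      fun t ht => hlineIQ x v t (hmem t ht)
    have hcont : ContinuousOn h (Set.Icc 0 1) :=
      fun t ht => (hd t ht).continuousAt.continuousWithinAt
    have hsc : StrictConvexOn ℝ (Set.Icc (0:ℝ) 1) h := by
      apply StrictMonoOn.strictConvexOn_of_deriv (convex_Icc 0 1) hcont
      rw [interior_Icc]
      intro s hs t ht hst
      have hs' : s ∈ Set.Icc (0:ℝ) 1 := ⟨le_of_lt hs.1, le_of_lt hs.2⟩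
      have ht' : t ∈ Set.Icc (0:ℝ) 1 := ⟨le_of_lt ht.1, le_of_lt ht.2⟩
      rw [(hd s hs').deriv, (hd t ht').deriv]
      have hvne : v ≠ 0 := sub_ne_zero.mpr (Ne.symm hxy)
      have hne : x + s • v ≠ x + t • v := by
        intro hcontr
        have h6 : (s - t) • v = 0 := by
          have h7 : (x + s • v) - (x + t • v) = (s - t) • v := by module
          rw [← h7, hcontr, sub_self]
        rcases smul_eq_zero.mp h6 with h7 | h7
        · exact (sub_ne_zero.mpr (ne_of_lt hst)) h7
        · exact hvne h7
      have hmono := mono _ (hmem s hs') _ (hmem t ht') hne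
      have hdiff : (x + t • v) - (x + s • v) = (t - s) • v := by module
      rw [hdiff, real_inner_smul_right] at hmono
      have hts : 0 < t - s := sub_pos.mpr hst
      have h5 : 0 < ⟪g (x + t • v) - g (x + s • v), v⟫ := by
        by_contra h5
        push_neg at h5
        nlinarith
      rw [inner_sub_left] at h5
      linarith
    have h0m : (0:ℝ) ∈ Set.Icc (0:ℝ) 1 := Set.left_mem_Icc.mpr zero_le_one
    have h1m : (1:ℝ) ∈ Set.Icc (0:ℝ) 1 := Set.right_mem_Icc.mpr zero_le_one
    have happ := hsc.2 h0m h1m (by norm_num : (0:ℝ) ≠ 1) ha hb hab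
    have e2 : a • (0:ℝ) + b • (1:ℝ) = b := by simp
    rw [e2] at happ
    have e3 : h b = IQ (a • x + b • y) := by
      have hae : a = 1 - b := by linarith
      have e : a • x + b • y = x + b • v := by rw [hv, hae]; module
      rw [hh, e]
    have e4 : h 0 = IQ x := by simp [hh]
    have e5 : h 1 = IQ y := by
      have e : x + (1:ℝ) • v = y := by rw [hv]; module
      simp only [hh, e]
    rw [e3, e4, e5] at happ
    exact happ
  have hg0 : g 0 = 0 := by simp [hg, hgψ0]
  -- uniqueness of critical point
  have crit : ∀ b ∈ Q, T • gψ b - KC b = 0 → b = 0 := by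
    intro b hb hcrit
    by_contra hbne
    have hmono := mono 0 h0Q b hb (Ne.symm hbne)
    rw [hg0, sub_zero, sub_zero] at hmono
    have : g b = 0 := hcrit
    rw [this] at hmono
    simp at hmono
  -- global minimum
  have minQ : ∀ b ∈ Q, IQ 0 ≤ IQ b := by
    intro b hb
    rcases eq_or_ne b 0 with rfl | hbne
    · exact le_refl _
    · set h : ℝ → ℝ := fun s : ℝ => IQ ((0:EuclideanSpace ℝ (Fin k)) + s • b) with hh
      have hmem : ∀ t ∈ Set.Icc (0:ℝ) 1, (0:EuclideanSpace ℝ (Fin k)) + t • b ∈ Q := by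
        intro t ht
        have := hseg 0 h0Q b hb t ht
        simpa using this
      have hd : ∀ t ∈ Set.Icc (0:ℝ) 1,
          HasDerivAt h ⟪g ((0:EuclideanSpace ℝ (Fin k)) + t • b), b⟫ t :=
        fun t ht => hlineIQ 0 b t (hmem t ht)
      have hcont : ContinuousOn h (Set.Icc 0 1) :=
        fun t ht => (hd t ht).continuousAt.continuousWithinAt
      have hmono : StrictMonoOn h (Set.Icc (0:ℝ) 1) := by
        apply strictMonoOn_of_deriv_pos (convex_Icc 0 1) hcont
        intro t ht
        rw [interior_Icc] at ht
        have ht' : t ∈ Set.Icc (0:ℝ) 1 := ⟨le_of_lt ht.1, le_of_lt ht.2⟩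
        rw [(hd t ht').deriv]
        have htb : (0:EuclideanSpace ℝ (Fin k)) ≠ 0 + t • b := by
          simp [smul_eq_zero, (ne_of_gt ht.1), hbne, eq_comm]
        have hp := mono 0 h0Q _ (hmem t ht') htb
        rw [hg0, sub_zero, sub_zero, zero_add, real_inner_smul_right] at hp
        rw [zero_add]
        have := ht.1
        nlinarith
      have h01 := hmono (Set.left_mem_Icc.mpr zero_le_one)
        (Set.right_mem_Icc.mpr zero_le_one) zero_lt_one
      have e4 : h 0 = IQ 0 := by simp [hh]
      have e5 : h 1 = IQ b := by simp [hh]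
      rw [e4, e5] at h01
      linarith
  exact ⟨concl1, sc, crit, minQ⟩
end

section
/- Let g : Q → ℝ be Lipschitz with constant L, ψ_s convex and C¹ on the bounded open convex set Q with |∇ψ_s(b)| → ∞ as b → ∂Q, K_M = {b ∈ Q : ψ_s(b) ≤ M}, and P_M the nearest-point projection onto the closed convex set K_M. Then there exists M₀ ∈ ℝ such that for all M > M₀ and all b ∈ Q, ψ_s(b) + g(b) ≥ ψ_s(P_M b) + g(P_M b). -/
open MeasureTheory Filter Topology InnerProductSpace
open scoped RealInnerProductSpace

lemma dirDeriv_aux {k : ℕ} {ψ : EuclideanSpace ℝ (Fin k) → ℝ}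
    {G p : EuclideanSpace ℝ (Fin k)} (h : HasGradientAt ψ G p)
    (v : EuclideanSpace ℝ (Fin k)) :
    HasDerivAt (fun t : ℝ => ψ (p + t • v)) (⟪G, v⟫) 0 := by
  have hF : HasFDerivAt ψ (toDual ℝ _ G) p := hasGradientAt_iff_hasFDerivAt.mp h
  have hcv : HasDerivAt (fun t : ℝ => p + t • v) v 0 := by
    simpa using ((hasDerivAt_id (0:ℝ)).smul_const v).const_add p
  have := hF.comp_hasDerivAt_of_eq 0 hcv (by simp)
  exact (by simpa [Function.comp, toDual_apply_apply] using this :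
    HasDerivAt (ψ ∘ fun t : ℝ => p + t • v) (⟪G, v⟫) 0)

lemma deriv_le_of_slope_aux {f : ℝ → ℝ} {d C : ℝ} (h : HasDerivAt f d 0)
    (hC : ∀ t ∈ Set.Ioo (0:ℝ) 1, f t ≤ f 0 + t * C) : d ≤ C := by
  have hs : Filter.Tendsto (slope f 0) (𝓝[>] (0:ℝ)) (𝓝 d) :=
    (hasDerivAt_iff_tendsto_slope.mp h).mono_left
      (nhdsWithin_mono 0 (fun t ht => ne_of_gt ht))
  refine le_of_tendsto hs ?_
  filter_upwards [Ioo_mem_nhdsGT_of_mem (by norm_num : (0:ℝ) ∈ Set.Ico 0 1)] with t ht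
  have h1 := hC t ht
  rw [slope_def_field, div_le_iff₀ (by simpa using ht.1)]
  nlinarith [ht.1]

lemma eventually_lt_of_deriv_neg_aux {f : ℝ → ℝ} {d : ℝ} (h : HasDerivAt f d 0)
    (hd : d < 0) : ∀ᶠ t in 𝓝[>] (0:ℝ), f t < f 0 := by
  have hs : Filter.Tendsto (slope f 0) (𝓝[>] (0:ℝ)) (𝓝 d) :=
    (hasDerivAt_iff_tendsto_slope.mp h).mono_left
      (nhdsWithin_mono 0 (fun t ht => ne_of_gt ht))
  have h2 : ∀ᶠ t in 𝓝[>] (0:ℝ), slope f 0 t < 0 := hs.eventually_lt_const hd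
  filter_upwards [h2, self_mem_nhdsWithin] with t ht ht0
  rw [slope_def_field] at ht
  have htpos : (0:ℝ) < t := ht0
  have := (div_neg_iff.mp (by simpa using ht)).resolve_left
    (fun h2 => absurd htpos (not_lt.mpr (by linarith [h2.2])))
  linarith [this.1]

set_option maxHeartbeats 1000000 in
/-- Projection lemma: if `g` is Lipschitz with constant `L` on `Q`, `ψ_s` is convex and
`C¹` on the bounded open convex set `Q` with `|∇ψ_s(b)| → ∞` as `b → ∂Q`,
`K_M = {b ∈ Q : ψ_s(b) ≤ M}` and `P M` is the nearest-point projection onto `K_M`, then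
there exists `M₀` such that for all `M > M₀` and `b ∈ Q`,
`ψ_s(b) + g(b) ≥ ψ_s(P M b) + g(P M b)`. -/
theorem projection_decreases_energy {k : ℕ}
    (Q : Set (EuclideanSpace ℝ (Fin k))) (hne : Q.Nonempty)
    (hbd : Bornology.IsBounded Q) (ho : IsOpen Q) (hc : Convex ℝ Q)
    (ψ : EuclideanSpace ℝ (Fin k) → ℝ) (hψconv : ConvexOn ℝ Q ψ)
    (gψ : EuclideanSpace ℝ (Fin k) → EuclideanSpace ℝ (Fin k))
    (hψd : ∀ b ∈ Q, HasGradientAt ψ (gψ b) b)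
    (hψdc : ContinuousOn gψ Q)
    (hblow : ∀ M : ℝ, ∃ δ : ℝ, 0 < δ ∧
      ∀ b ∈ Q, Metric.infDist b (frontier Q) ≤ δ → M ≤ ‖gψ b‖)
    (g : EuclideanSpace ℝ (Fin k) → ℝ) (L : ℝ) (hL : 0 ≤ L)
    (hg : ∀ x ∈ Q, ∀ y ∈ Q, |g x - g y| ≤ L * ‖x - y‖)
    (P : ℝ → EuclideanSpace ℝ (Fin k) → EuclideanSpace ℝ (Fin k))
    (hP : ∀ M : ℝ, ∀ b ∈ Q, ({y ∈ Q | ψ y ≤ M}).Nonempty →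
      (P M b ∈ Q ∧ ψ (P M b) ≤ M) ∧ ∀ y ∈ Q, ψ y ≤ M → ‖b - P M b‖ ≤ ‖b - y‖) :
    ∃ M₀ : ℝ, ∀ M : ℝ, M₀ < M → ∀ b ∈ Q,
      ψ (P M b) + g (P M b) ≤ ψ b + g b := by
  obtain ⟨b₀, hb₀⟩ := hne
  obtain ⟨δ, hδ, hδL⟩ := hblow L
  set S : Set (EuclideanSpace ℝ (Fin k)) :=
    closure Q ∩ {x | δ ≤ Metric.infDist x (frontier Q)} with hS
  have hSQ : S ⊆ Q := by
    rintro x ⟨hx1, hx2⟩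
    by_contra hxQ
    have hxf : x ∈ frontier Q := by
      rw [frontier, ho.interior_eq]; exact ⟨hx1, hxQ⟩
    have : Metric.infDist x (frontier Q) = 0 := Metric.infDist_zero_of_mem hxf
    have hx2' : δ ≤ Metric.infDist x (frontier Q) := hx2
    rw [this] at hx2'; linarith
  have hScomp : IsCompact S := by
    apply Metric.isCompact_of_isClosed_isBounded
    · exact isClosed_closure.inter (isClosed_le continuous_const
        (Metric.continuous_infDist_pt _))
    · exact hbd.closure.subset Set.inter_subset_left
  have hψcont : ContinuousOn ψ Q := fun x hx => ((hψd x hx).continuousAt).continuousWithinAt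
  have hbdd : BddAbove (ψ '' S) :=
    (hScomp.image_of_continuousOn (hψcont.mono hSQ)).bddAbove
  refine ⟨max (ψ b₀) (sSup (ψ '' S)), fun M hM b hb => ?_⟩
  have hKne : ({y ∈ Q | ψ y ≤ M}).Nonempty :=
    ⟨b₀, hb₀, ((le_max_left _ _).trans_lt hM).le⟩
  obtain ⟨⟨hpQ, hpM⟩, hmin⟩ := hP M b hb hKne
  set p := P M b with hp
  by_cases hbM : ψ b ≤ M
  · -- then p = b
    have h0 : ‖b - p‖ = 0 := le_antisymm (by simpa using hmin b hb hbM) (norm_nonneg _)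
    have : p = b := by
      have := sub_eq_zero.mp (norm_eq_zero.mp h0); rw [this]
    rw [this]
  · push_neg at hbM
    have hbp : b ≠ p := by
      intro h; rw [← h] at hpM; linarith
    have hGrad := hψd p hpQ
    -- ψ p = M
    have hψpM : ψ p = M := by
      by_contra hne'
      have hlt : ψ p < M := lt_of_le_of_ne hpM hne'
      -- find small t with ψ (p + t • (b - p)) < M
      have hcontψ : ContinuousAt (fun t : ℝ => ψ (p + t • (b - p))) 0 := by
        have h1 : ContinuousAt (fun t : ℝ => p + t • (b - p)) 0 :=
          (continuous_const.add (continuous_id.smul continuous_const)).continuousAt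
        have h2 : ContinuousAt ψ (p + (0:ℝ) • (b - p)) := by
          simpa using hGrad.continuousAt
        exact ContinuousAt.comp (g := ψ) (f := fun t : ℝ => p + t • (b - p)) h2 h1
      have hev : ∀ᶠ t : ℝ in 𝓝[>] 0, ψ (p + t • (b - p)) < M :=
        ((hcontψ.eventually_lt_const (by simpa using hlt)).mono (fun t ht => ht)).filter_mono
          nhdsWithin_le_nhds
      have hev2 : ∀ᶠ t : ℝ in 𝓝[>] 0, t ∈ Set.Ioo (0:ℝ) 1 :=
        Ioo_mem_nhdsGT_of_mem (by norm_num : (0:ℝ) ∈ Set.Ico 0 1)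
      obtain ⟨t, ht1, ht2⟩ := (hev.and hev2).exists
      set y := p + t • (b - p) with hy
      have hyQ : y ∈ Q := by
        have : y = (1 - t) • p + t • b := by rw [hy]; module
        rw [this]
        exact hc hpQ hb (by linarith [ht2.2]) ht2.1.le (by ring)
      have hmy := hmin y hyQ ht1.le
      have hby : b - y = (1 - t) • (b - p) := by rw [hy]; module
      rw [hby, norm_smul] at hmy
      have hbpn : 0 < ‖b - p‖ := norm_sub_pos_iff.mpr hbp
      have habs : |1 - t| = 1 - t := abs_of_pos (by linarith [ht2.2])
      rw [Real.norm_eq_abs, habs] at hmy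
      nlinarith [ht2.1]
    -- p is near the boundary, so the gradient is large
    have hpd : Metric.infDist p (frontier Q) ≤ δ := by
      by_contra hgt
      push_neg at hgt
      have hpS : p ∈ S := ⟨subset_closure hpQ, hgt.le⟩
      have : ψ p ≤ sSup (ψ '' S) := le_csSup hbdd ⟨p, hpS, rfl⟩
      have := this.trans (le_max_right (ψ b₀) (sSup (ψ '' S)))
      rw [hψpM] at this
      linarith
    have hGL : L ≤ ‖gψ p‖ := hδL p hpQ hpd
    set G := gψ p with hG
    set n := b - p with hn
    have hn0 : n ≠ 0 := sub_ne_zero.mpr hbp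
    -- normal cone property of the projection
    have hNC : ∀ y ∈ Q, ψ y ≤ M → ⟪n, y - p⟫ ≤ 0 := by
      intro y hyQ hyM
      have key : ∀ t ∈ Set.Ioo (0:ℝ) 1, ⟪n, y - p⟫ ≤ t / 2 * ‖y - p‖ ^ 2 := by
        intro t ht
        set z := p + t • (y - p) with hz
        have hzQ : z ∈ Q := by
          have : z = (1 - t) • p + t • y := by rw [hz]; module
          rw [this]; exact hc hpQ hyQ (by linarith [ht.2]) ht.1.le (by ring)
        have hzM : ψ z ≤ M := by
          have h1 : z = (1 - t) • p + t • y := by rw [hz]; module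
          have := hψconv.2 hpQ hyQ (by linarith [ht.2] : (0:ℝ) ≤ 1 - t) ht.1.le (by ring)
          rw [← h1] at this
          simp only [smul_eq_mul] at this
          nlinarith [ht.1, ht.2, hpM, hyM]
        have hmz := hmin z hzQ hzM
        have hbz : b - z = n - t • (y - p) := by rw [hz, hn]; module
        have hsq : ‖n‖ ^ 2 ≤ ‖n - t • (y - p)‖ ^ 2 := by
          rw [← hbz]
          exact pow_le_pow_left₀ (norm_nonneg _) hmz 2
        have hexp : ‖n - t • (y - p)‖ ^ 2
            = ‖n‖ ^ 2 - 2 * (t * ⟪n, y - p⟫) + t ^ 2 * ‖y - p‖ ^ 2 := by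
          rw [show ‖n - t • (y - p)‖ ^ 2
              = ‖n‖ ^ 2 - 2 * ⟪n, t • (y - p)⟫ + ‖t • (y - p)‖ ^ 2 from
            norm_sub_sq_real n (t • (y - p)), real_inner_smul_right, norm_smul,
            Real.norm_eq_abs, abs_of_pos ht.1]
          ring
        rw [hexp] at hsq
        nlinarith [ht.1]
      have htend : Filter.Tendsto (fun t : ℝ => t / 2 * ‖y - p‖ ^ 2) (𝓝[>] 0) (𝓝 0) := by
        have hcont : Continuous (fun t : ℝ => t / 2 * ‖y - p‖ ^ 2) := by continuity
        have h0 := (hcont.tendsto 0).mono_left (nhdsWithin_le_nhds (s := Set.Ioi (0:ℝ)))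
        simpa using h0
      refine ge_of_tendsto htend ?_
      filter_upwards [Ioo_mem_nhdsGT_of_mem (by norm_num : (0:ℝ) ∈ Set.Ico 0 1)] with t ht
      exact key t ht
    -- directional characterization
    have hdir : ∀ v, ⟪G, v⟫ < 0 → ⟪n, v⟫ ≤ 0 := by
      intro v hv
      have hD := dirDeriv_aux hGrad v
      have hev1 : ∀ᶠ t : ℝ in 𝓝[>] 0, ψ (p + t • v) < ψ (p + (0:ℝ) • v) :=
        eventually_lt_of_deriv_neg_aux hD hv
      have hev2 : ∀ᶠ t : ℝ in 𝓝[>] 0, p + t • v ∈ Q := by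
        have hcont : ContinuousAt (fun t : ℝ => p + t • v) 0 :=
          (continuous_const.add (continuous_id.smul continuous_const)).continuousAt
        exact (hcont.eventually_mem (ho.mem_nhds (by simpa using hpQ))).filter_mono
          nhdsWithin_le_nhds
      obtain ⟨t, ht1, ht2, ht3⟩ := (hev1.and (hev2.and self_mem_nhdsWithin)).exists
      have htpos : (0:ℝ) < t := ht3
      have hψt : ψ (p + t • v) ≤ M := by
        simp only [zero_smul, add_zero] at ht1
        linarith [hψpM ▸ ht1]
      have := hNC (p + t • v) ht2 hψt
      rw [add_sub_cancel_left, real_inner_smul_right] at this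
      nlinarith
    have hconv : ⟪G, n⟫ ≤ ψ b - ψ p := by
      have hD := dirDeriv_aux hGrad n
      apply deriv_le_of_slope_aux hD
      intro t ht
      have h1 : p + t • n = (1 - t) • p + t • b := by rw [hn]; module
      have := hψconv.2 hpQ hb (by linarith [ht.2] : (0:ℝ) ≤ 1 - t) ht.1.le (by ring)
      rw [← h1] at this
      simp only [smul_eq_mul] at this
      simp only [zero_smul, add_zero]
      nlinarith
    by_cases hG0 : G = 0
    · -- degenerate case: L = 0
      have hL0 : L = 0 := le_antisymm (by simpa [hG0] using hGL) hL
      have hgpb : |g p - g b| ≤ 0 := by simpa [hL0] using hg p hpQ b hb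
      have h2 : g p = g b := by
        have := abs_nonneg (g p - g b)
        have : |g p - g b| = 0 := le_antisymm hgpb this
        have := abs_eq_zero.mp this
        linarith [this]
      have h3 : (0:ℝ) ≤ ψ b - ψ p := by
        have : ⟪G, n⟫ = 0 := by rw [hG0]; simp
        linarith [hconv, this.symm.le]
      linarith
    · -- alignment: n is a positive multiple of G
      have hGnorm : 0 < ‖G‖ := norm_pos_iff.mpr hG0
      have hdir' : ∀ v, ⟪G, v⟫ ≤ 0 → ⟪n, v⟫ ≤ 0 := by
        intro v hv
        have key : ∀ ε : ℝ, 0 < ε → ⟪n, v⟫ ≤ ε * ⟪n, G⟫ := by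
          intro ε hε
          have h1 : ⟪G, v - ε • G⟫ < 0 := by
            rw [inner_sub_right, real_inner_smul_right, real_inner_self_eq_norm_sq]
            nlinarith [mul_pos hε (pow_pos hGnorm 2)]
          have h2 := hdir _ h1
          rw [inner_sub_right, real_inner_smul_right] at h2
          linarith
        have htend : Filter.Tendsto (fun ε : ℝ => ε * ⟪n, G⟫) (𝓝[>] 0) (𝓝 0) := by
          have hcont : Continuous (fun ε : ℝ => ε * ⟪n, G⟫) := by continuity
          have h0 := (hcont.tendsto 0).mono_left (nhdsWithin_le_nhds (s := Set.Ioi (0:ℝ)))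
          simpa using h0
        refine ge_of_tendsto htend ?_
        filter_upwards [self_mem_nhdsWithin] with ε hε
        exact key ε hε
      have hnG : 0 ≤ ⟪n, G⟫ := by
        have h1 : ⟪G, -G⟫ < 0 := by
          rw [inner_neg_right, real_inner_self_eq_norm_sq]; nlinarith
        have := hdir _ h1
        rw [inner_neg_right] at this
        linarith
      have hw : ⟪n, n - (⟪n, G⟫ / ‖G‖ ^ 2) • G⟫ ≤ 0 := by
        apply hdir'
        rw [inner_sub_right, real_inner_smul_right, real_inner_self_eq_norm_sq,
          real_inner_comm G n,
          div_mul_cancel₀ _ (by positivity : ‖G‖ ^ 2 ≠ 0)]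
        simp
      rw [inner_sub_right, real_inner_smul_right, real_inner_self_eq_norm_sq] at hw
      have hsq : ‖n‖ ^ 2 * ‖G‖ ^ 2 ≤ ⟪n, G⟫ ^ 2 := by
        have hw' : ‖n‖ ^ 2 ≤ ⟪n, G⟫ / ‖G‖ ^ 2 * ⟪n, G⟫ := by linarith
        have h2 := mul_le_mul_of_nonneg_right hw' (le_of_lt (pow_pos hGnorm 2))
        have h3 : ⟪n, G⟫ / ‖G‖ ^ 2 * ⟪n, G⟫ * ‖G‖ ^ 2 = ⟪n, G⟫ ^ 2 := by
          field_simp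
        rw [h3] at h2
        exact h2
      have hGn : ‖G‖ * ‖n‖ ≤ ⟪G, n⟫ := by
        rw [real_inner_comm]
        nlinarith [norm_nonneg n, norm_nonneg G, mul_nonneg (norm_nonneg G) (norm_nonneg n)]
      -- final estimate
      have hLip := hg p hpQ b hb
      have h1 : g p - g b ≤ L * ‖p - b‖ := (le_abs_self _).trans hLip
      have h2 : ‖p - b‖ = ‖n‖ := by rw [hn, norm_sub_rev]
      have h3 : L * ‖n‖ ≤ ‖G‖ * ‖n‖ := mul_le_mul_of_nonneg_right hGL (norm_nonneg _)
      rw [h2] at h1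
      linarith
end
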